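/- Let T > R > P > S, χ > 1, and let p be the extortionate strategy p₁ = 1 − φ(χ−1)(R−P)/(P−S), p₂ = 1 − φ(1+χ(T−P)/(P−S)), p₃ = φ(χ+(T−P)/(P−S)), p₄ = 0 with φ > 0 valid. If Y always cooperates (q = (1,1,1,1)), the resulting score of X is s_x = ((1−p₁)T + R·p₃)/((1−p₁) + p₃) = (P(T−R) + χ(R(T−S) − P(T−R)))/((T−R) + χ(R−S)). -/

import Mathlib

open Matrix

def pdMatrix (p q f : Fin 4 → ℝ) : Matrix (Fin 4) (Fin 4) ℝ :=
  !![p 0 * q 0 - 1, p 0 - 1, q 0 - 1, f 0;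
     p 1 * q 2,     p 1 - 1, q 2,     f 1;
     p 2 * q 1,     p 2,     q 1 - 1, f 2;
     p 3 * q 3,     p 3,     q 3,     f 3]

/-- Score of the extortioner X against a full cooperator Y. -/
theorem extortioner_score_vs_cooperator (T R P S χ φ : ℝ)
    (hTR : T > R) (hRP : R > P) (hPS : P > S) (hχ : 1 < χ) (hφ : 0 < φ)
    (hvalid :
      (1 - φ * (χ - 1) * (R - P) / (P - S)) ∈ Set.Icc (0 : ℝ) 1 ∧
      (1 - φ * (1 + χ * (T - P) / (P - S))) ∈ Set.Icc (0 : ℝ) 1 ∧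
      (φ * (χ + (T - P) / (P - S))) ∈ Set.Icc (0 : ℝ) 1) :
    let p : Fin 4 → ℝ := ![1 - φ * (χ - 1) * (R - P) / (P - S),
      1 - φ * (1 + χ * (T - P) / (P - S)), φ * (χ + (T - P) / (P - S)), 0]
    let one : Fin 4 → ℝ := fun _ => 1
    let Sx : Fin 4 → ℝ := ![R, S, T, P]
    (pdMatrix p one Sx).det / (pdMatrix p one one).det
        = ((1 - p 0) * T + R * p 2) / ((1 - p 0) + p 2) ∧
    (pdMatrix p one Sx).det / (pdMatrix p one one).det
        = (P * (T - R) + χ * (R * (T - S) - P * (T - R)))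
            / ((T - R) + χ * (R - S)) := by
  intro p one Sx
  have hPS' : P - S > 0 := by linarith
  have hPSne : P - S ≠ 0 := ne_of_gt hPS'
  have hden : T - R + χ * (R - S) > 0 := by nlinarith
  have hdne : T - R + χ * (R - S) ≠ 0 := ne_of_gt hden
  have hp0 : p 0 = 1 - φ * (χ - 1) * (R - P) / (P - S) := rfl
  have hp1 : p 1 = 1 - φ * (1 + χ * (T - P) / (P - S)) := rfl
  have hp2 : p 2 = φ * (χ + (T - P) / (P - S)) := rfl
  have hp3 : p 3 = 0 := rfl
  have hsum : (1 - p 0) + p 2 = φ * (T - R + χ * (R - S)) / (P - S) := by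
    rw [hp0, hp2]; field_simp; ring
  have hsumne : (1 - p 0) + p 2 ≠ 0 := by
    rw [hsum]
    positivity
  have hnum : (pdMatrix p one Sx).det = -((1 - p 0) * T + R * p 2) := by
    simp [pdMatrix, Matrix.det_succ_row_zero, Fin.sum_univ_succ, Fin.succAbove, Fin.castSucc, Fin.castAdd, Fin.castLE, one, Sx, hp3]
    ring
  have hden2 : (pdMatrix p one one).det = -((1 - p 0) + p 2) := by
    simp [pdMatrix, Matrix.det_succ_row_zero, Fin.sum_univ_succ, Fin.succAbove, Fin.castSucc, Fin.castAdd, Fin.castLE, one, hp3]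
    ring
  have key : (pdMatrix p one Sx).det / (pdMatrix p one one).det
      = ((1 - p 0) * T + R * p 2) / ((1 - p 0) + p 2) := by
    rw [hnum, hden2, neg_div_neg_eq]
  refine ⟨key, ?_⟩
  rw [key, hp0, hp2]
  rw [div_eq_div_iff (by rw [← hp0, ← hp2]; exact hsumne) hdne]
  field_simp
  ring
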